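/- Let τ range over multi-partition types of size n relevant to the character variety count, and for each τ let deg 𝓗_{τ'} be the degree of the normalized hook polynomial. Then the quantity −n/2 + (1/2)Σ_{λ∈τ} m_λ Σᵢ λᵢ(λᵢ+1) is uniquely maximized over all types τ of size n by the type τ₀ consisting of the single partition (n) with multiplicity 1 (equivalently, the dual statement: among types of total size n, Σ_{λ∈τ} m_λ(−½⟨λ,λ⟩ + Σ_{□∈λ} h(□)) is maximal exactly when τ = {(n)}). -/

import Mathlib

noncomputable section

/-- A partition, encoded as a nonempty decreasing list of positive parts. -/
def IsPartitionList (l : List ℕ) : Prop :=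
  l ≠ [] ∧ l.Pairwise (· ≥ ·) ∧ ∀ x ∈ l, 0 < x

lemma list_sq_le (l : List ℕ) :
    (l.map fun x => x * x).sum ≤ l.sum * l.sum := by
  induction l with
  | nil => simp
  | cons a l ih =>
    simp only [List.map_cons, List.sum_cons]
    have expand : (a + l.sum) * (a + l.sum)
        = a * a + l.sum * l.sum + 2 * (a * l.sum) := by ring
    linarith [Nat.zero_le (a * l.sum)]

lemma list_sq_eq (l : List ℕ) (hpos : ∀ x ∈ l, 0 < x)
    (h : (l.map fun x => x * x).sum = l.sum * l.sum) : l.length ≤ 1 := by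
  match l with
  | [] => simp
  | [a] => simp
  | a :: b :: t =>
    exfalso
    have h1 := list_sq_le (b :: t)
    have ha : 0 < a := hpos a (by simp)
    have hb : 0 < b := hpos b (by simp)
    simp only [List.map_cons, List.sum_cons] at h h1
    have expand : (a + (b + t.sum)) * (a + (b + t.sum))
        = a * a + (b + t.sum) * (b + t.sum) + 2 * (a * (b + t.sum)) := by ring
    have hp : 1 ≤ a * (b + t.sum) := Nat.mul_pos ha (by omega)
    linarith

lemma finset_sq_le {ι : Type*} [DecidableEq ι] (s : Finset ι) (f : ι → ℕ) :
    (∑ i ∈ s, f i * f i) ≤ (∑ i ∈ s, f i) * (∑ i ∈ s, f i) := by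
  induction s using Finset.induction_on with
  | empty => simp
  | @insert a s ha ih =>
    rw [Finset.sum_insert ha, Finset.sum_insert ha]
    have expand : (f a + ∑ i ∈ s, f i) * (f a + ∑ i ∈ s, f i)
        = f a * f a + (∑ i ∈ s, f i) * (∑ i ∈ s, f i)
          + 2 * (f a * ∑ i ∈ s, f i) := by ring
    linarith [Nat.zero_le (f a * ∑ i ∈ s, f i)]

lemma finset_sq_eq {ι : Type*} [DecidableEq ι] (s : Finset ι) (f : ι → ℕ)
    (hpos : ∀ i ∈ s, 0 < f i)
    (h : (∑ i ∈ s, f i * f i) = (∑ i ∈ s, f i) * (∑ i ∈ s, f i)) :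
    s.card ≤ 1 := by
  induction s using Finset.induction_on with
  | empty => simp
  | @insert a s ha ih =>
    rw [Finset.sum_insert ha, Finset.sum_insert ha] at h
    have h1 := finset_sq_le s f
    have hfa : 0 < f a := hpos a (Finset.mem_insert_self a s)
    have expand : (f a + ∑ i ∈ s, f i) * (f a + ∑ i ∈ s, f i)
        = f a * f a + (∑ i ∈ s, f i) * (∑ i ∈ s, f i)
          + 2 * (f a * ∑ i ∈ s, f i) := by ring
    have hprod : f a * ∑ i ∈ s, f i = 0 := by
      have := Nat.zero_le (f a * ∑ i ∈ s, f i)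
      linarith
    have hT : (∑ i ∈ s, f i) = 0 := by
      rcases Nat.mul_eq_zero.mp hprod with h' | h'
      · omega
      · exact h'
    have hs : s = ∅ := by
      by_contra hne
      obtain ⟨i, hi⟩ := Finset.nonempty_iff_ne_empty.2 hne
      have h2 := hpos i (Finset.mem_insert_of_mem hi)
      have h3 := (Finset.sum_eq_zero_iff).mp hT i hi
      omega
    simp [hs]

lemma map_mul_succ_sum (l : List ℕ) :
    (l.map fun x => x * (x + 1)).sum = (l.map fun x => x * x).sum + l.sum := by
  induction l with
  | nil => simp
  | cons a l ih =>
    simp only [List.map_cons, List.sum_cons, ih]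
    ring

/-- Among multi-partition types `τ` of total size `n`, the quantity
`Σ_{λ∈τ} m_λ Σᵢ λᵢ(λᵢ+1)` (twice the normalized degree `deg 𝓗_{τ'}` plus `n`) is at most
`n(n+1)` and is maximal exactly for the type consisting of the single partition `(n)` with
multiplicity `1`. -/
theorem degree_maximized_by_single_row (n : ℕ) (hn : 0 < n) (τ : List ℕ →₀ ℕ)
    (hpart : ∀ l ∈ τ.support, IsPartitionList l)
    (hsize : (τ.sum fun l m => m * l.sum) = n) :
    (τ.sum fun l m => m * (l.map fun x => x * (x + 1)).sum) ≤ n * (n + 1) ∧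
    ((τ.sum fun l m => m * (l.map fun x => x * (x + 1)).sum) = n * (n + 1) ↔
      τ = Finsupp.single [n] 1) := by
  classical
  have hsize' : (∑ l ∈ τ.support, τ l * l.sum) = n := hsize
  have hsplit : (τ.sum fun l m => m * (l.map fun x => x * (x + 1)).sum)
      = (∑ l ∈ τ.support, τ l * (l.map fun x => x * x).sum) + n := by
    rw [Finsupp.sum, ← hsize']
    rw [← Finset.sum_add_distrib]
    refine Finset.sum_congr rfl fun l _ => ?_
    rw [map_mul_succ_sum, Nat.mul_add]
  set F := ∑ l ∈ τ.support, τ l * (l.map fun x => x * x).sum with hF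
  have step1 : F ≤ ∑ l ∈ τ.support, τ l * (l.sum * l.sum) :=
    Finset.sum_le_sum fun l _ => Nat.mul_le_mul_left _ (list_sq_le l)
  have key : ∀ m k : ℕ, m * (k * k) ≤ (m * k) * (m * k) := by
    intro m k
    rcases Nat.eq_zero_or_pos m with hm | hm
    · simp [hm]
    · calc m * (k * k) ≤ m * m * (k * k) :=
            Nat.mul_le_mul_right _ (Nat.le_mul_of_pos_left m hm)
        _ = (m * k) * (m * k) := by ring
  have step2 : (∑ l ∈ τ.support, τ l * (l.sum * l.sum))
      ≤ ∑ l ∈ τ.support, (τ l * l.sum) * (τ l * l.sum) :=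
    Finset.sum_le_sum fun l _ => key _ _
  have step3 : (∑ l ∈ τ.support, (τ l * l.sum) * (τ l * l.sum)) ≤ n * n := by
    have := finset_sq_le τ.support (fun l => τ l * l.sum)
    simpa [hsize'] using this
  have hFle : F ≤ n * n := le_trans step1 (le_trans step2 step3)
  constructor
  · rw [hsplit]; nlinarith
  constructor
  · intro heq
    rw [hsplit] at heq
    have hFeq : F = n * n := by nlinarith
    have hgpos : ∀ l ∈ τ.support, 0 < τ l * l.sum := by
      intro l hl
      obtain ⟨hne, _, hpos⟩ := hpart l hl
      have hm : 0 < τ l := Nat.pos_of_ne_zero (Finsupp.mem_support_iff.mp hl)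
      have hk : 0 < l.sum := by
        match l, hne with
        | a :: t, _ =>
          have := hpos a (by simp)
          simp only [List.sum_cons]
          omega
      exact Nat.mul_pos hm hk
    have hBeq : (∑ l ∈ τ.support, (τ l * l.sum) * (τ l * l.sum)) = n * n := by omega
    have hcard : τ.support.card ≤ 1 := by
      apply finset_sq_eq τ.support (fun l => τ l * l.sum) hgpos
      rw [hBeq, hsize']
    have hnonempty : τ.support.Nonempty := by
      by_contra hne
      rw [Finset.not_nonempty_iff_eq_empty] at hne
      rw [hne] at hsize'
      simp at hsize'
      omega
    obtain ⟨L0, hL0⟩ := Finset.card_eq_one.mp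
      (le_antisymm hcard (Finset.Nonempty.card_pos hnonempty))
    have hsum1 : τ L0 * L0.sum = n := by rw [← hsize', hL0, Finset.sum_singleton]
    have hsum2 : τ L0 * (L0.map fun x => x * x).sum = n * n := by
      rw [← hFeq, hF, hL0, Finset.sum_singleton]
    have hmemL0 : L0 ∈ τ.support := by rw [hL0]; exact Finset.mem_singleton_self _
    obtain ⟨hne0, _, hpos0⟩ := hpart L0 hmemL0
    have hmpos : 0 < τ L0 := Nat.pos_of_ne_zero (Finsupp.mem_support_iff.mp hmemL0)
    have hkpos : 0 < L0.sum := by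
      match L0, hne0, hpos0 with
      | a :: t, _, hpos0 =>
        have := hpos0 a (by simp)
        simp only [List.sum_cons]
        omega
    have hqle : (L0.map fun x => x * x).sum ≤ L0.sum * L0.sum := list_sq_le L0
    -- from m*q = (m*k)*(m*k): q = m*(k*k)
    have hq : (L0.map fun x => x * x).sum = τ L0 * (L0.sum * L0.sum) := by
      apply Nat.eq_of_mul_eq_mul_left hmpos
      rw [hsum2, ← hsum1]; ring
    have hm1 : τ L0 = 1 := by
      have : τ L0 * (L0.sum * L0.sum) ≤ 1 * (L0.sum * L0.sum) := by
        rw [one_mul, ← hq]; exact hqle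
      have hkk : 0 < L0.sum * L0.sum := Nat.mul_pos hkpos hkpos
      have := Nat.le_of_mul_le_mul_right this hkk
      omega
    have hqeq : (L0.map fun x => x * x).sum = L0.sum * L0.sum := by
      rw [hq, hm1, one_mul]
    have hlen := list_sq_eq L0 hpos0 hqeq
    have hL0eq : L0 = [n] := by
      match L0, hne0, hlen, hsum1, hm1 with
      | [a], _, _, hsum1, hm1 =>
        have : a = n := by rw [hm1] at hsum1; simpa using hsum1
        rw [this]
    have hsupp := Finsupp.support_eq_singleton.mp hL0
    subst hL0eq
    rw [hm1] at hsupp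
    exact hsupp.2
  · intro heq
    subst heq
    rw [Finsupp.sum_single_index (by simp)]
    simp
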